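/- arXiv:1212.3392 — 5 statements merged into one kernel-verified Lean document; each statement's English description precedes it below -/
import Mathlib

section
/- Let A be an associative unital algebra, q a scalar with q² ≠ 1, and Z = [[e,f],[0,1]] with e invertible, f ≠ 0, and q·e·f = f·e. Write Z̃ = [[ẽ, f̃],[0,1]] = [[e⁻¹, −e⁻¹f],[0,1]]. Then q·ẽ·f̃ ≠ f̃·ẽ, provided f·e⁻² ≠ 0; that is, the inverse matrix Z̃ does not lie in H_q(A). -/
/-- If `q² ≠ 1`, `f·e⁻² ≠ 0` and `q·e·f = f·e`, then the inverse matrix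
`Z̃ = [[e⁻¹, -e⁻¹f],[0,1]]` does not lie in `H_q(A)`: its entries `ẽ = e⁻¹`,
`f̃ = -e⁻¹f` fail the relation `q·ẽ·f̃ = f̃·ẽ`. -/
theorem inverse_not_in_Hq (A : Type*) [Ring A] [Algebra ℂ A]
    (q : ℂ) (hq2 : q ^ 2 ≠ 1) (e : Aˣ) (f : A) (hf : f ≠ 0)
    (h : q • ((e : A) * f) = f * (e : A))
    (hfe : f * (((e⁻¹ * e⁻¹ : Aˣ) : A)) ≠ 0) :
    q • (((e⁻¹ : Aˣ) : A) * (-(((e⁻¹ : Aˣ) : A) * f)))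
      ≠ (-(((e⁻¹ : Aˣ) : A) * f)) * ((e⁻¹ : Aˣ) : A) := by
  intro hcontra
  set a : A := ((e⁻¹ : Aˣ) : A) with ha
  have hae : a * (e : A) = 1 := e.inv_mul
  have hea : (e : A) * a = 1 := e.mul_inv
  have hq0 : q ≠ 0 := by
    intro hq
    subst hq
    simp only [zero_smul] at h
    apply hf
    calc f = f * ((e : A) * a) := by rw [hea, mul_one]
    _ = (f * (e : A)) * a := by rw [mul_assoc]
    _ = 0 := by rw [← h, zero_mul]
  -- key: a * f = q • (f * a)
  have key : a * f = q • (f * a) := by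
    calc a * f = a * (f * ((e : A) * a)) := by rw [hea, mul_one]
    _ = a * (f * (e : A)) * a := by rw [← mul_assoc f, ← mul_assoc]
    _ = a * (q • ((e : A) * f)) * a := by rw [h]
    _ = q • (a * ((e : A) * f) * a) := by rw [mul_smul_comm, smul_mul_assoc]
    _ = q • ((a * (e : A)) * (f * a)) := by rw [← mul_assoc a, mul_assoc]
    _ = q • (f * a) := by rw [hae, one_mul]
  have hmul : ((e⁻¹ * e⁻¹ : Aˣ) : A) = a * a := rfl
  rw [hmul] at hfe
  have lhs : q • (a * (-(a * f))) = -(q ^ 3 • (f * (a * a))) := by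
    rw [mul_neg, smul_neg]
    congr 1
    calc q • (a * (a * f)) = q • (a * (q • (f * a))) := by rw [key]
    _ = (q * q) • (a * (f * a)) := by rw [mul_smul_comm, smul_smul]
    _ = (q * q) • ((a * f) * a) := by rw [mul_assoc]
    _ = (q * q) • ((q • (f * a)) * a) := by rw [key]
    _ = (q * q * q) • (f * (a * a)) := by rw [smul_mul_assoc, smul_smul, mul_assoc f]
    _ = q ^ 3 • (f * (a * a)) := by ring_nf
  have rhs : (-(a * f)) * a = -(q • (f * (a * a))) := by
    rw [neg_mul, key, smul_mul_assoc, mul_assoc]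
  rw [lhs, rhs, neg_inj] at hcontra
  have hz : (q ^ 3 - q) • (f * (a * a)) = 0 := by
    rw [sub_smul, hcontra, sub_self]
  have hc : q ^ 3 - q ≠ 0 := by
    intro hc
    apply hq2
    have : q * (q ^ 2 - 1) = 0 := by linear_combination hc
    rcases mul_eq_zero.mp this with h' | h'
    · exact absurd h' hq0
    · exact sub_eq_zero.mp h'
  apply hfe
  calc f * (a * a) = (q ^ 3 - q)⁻¹ • ((q ^ 3 - q) • (f * (a * a))) := by
        rw [smul_smul, inv_mul_cancel₀ hc, one_smul]
  _ = 0 := by rw [hz, smul_zero]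
end

section
/- In the twisted power series ring (S,σ)[[X]] with q central invertible, the operators Θ^(l) defined by Θ^(l)(Σ_i X^i a_i) = Σ_i X^i binom(i+l, l)_q a_{i+l} satisfy the composition rule Θ^(i) ∘ Θ^(j) = binom(i+j, i)_q · Θ^(i+j) for all i, j ∈ ℕ. -/
/-- The Gaussian (q-)binomial coefficient, defined via the q-Pascal rule
`binom(m+1, n+1)_q = binom(m, n)_q + q^(n+1)·binom(m, n+1)_q`. -/
def qBinomRec {C : Type*} [Field C] (q : C) : ℕ → ℕ → C
  | _, 0 => 1
  | 0, _ + 1 => 0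
  | m + 1, n + 1 => qBinomRec q m n + q ^ (n + 1) * qBinomRec q m (n + 1)

/-- The operator `Θ^(l)` on the twisted power series ring `(S,σ)[[X]]`,
acting on coefficient sequences by
`Θ^(l)(Σ_i X^i a_i) = Σ_i X^i binom(i+l,l)_q a_{i+l}`. -/
def thetaHat {C : Type*} [Field C] {S : Type*} [Ring S] [Algebra C S]
    (q : C) (l : ℕ) (f : ℕ → S) : ℕ → S :=
  fun n => qBinomRec q (n + l) l • f (n + l)

open Polynomial

/-- Integer-polynomial version of the Gaussian binomial coefficient. -/
noncomputable def qBinomPoly : ℕ → ℕ → Polynomial ℤ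
  | _, 0 => 1
  | 0, _ + 1 => 0
  | m + 1, n + 1 => qBinomPoly m n + X ^ (n + 1) * qBinomPoly m (n + 1)
  termination_by m n => m

/-- The "q-factorial-like" product `∏_{k=1}^m (X^k - 1)`. -/
noncomputable def qFac (m : ℕ) : Polynomial ℤ := ∏ k ∈ Finset.range m, (X ^ (k + 1) - 1)

lemma qFac_ne_zero (m : ℕ) : qFac m ≠ 0 := by
  refine Finset.prod_ne_zero_iff.mpr fun k _ => ?_
  simpa using X_pow_sub_C_ne_zero (R := ℤ) (Nat.succ_pos k) 1

lemma qFac_zero : qFac 0 = 1 := by simp [qFac]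

lemma qFac_succ (m : ℕ) : qFac (m + 1) = qFac m * (X ^ (m + 1) - 1) :=
  Finset.prod_range_succ _ _

lemma qBinomPoly_eq_zero : ∀ m n : ℕ, m < n → qBinomPoly m n = 0
  | 0, _ + 1, _ => by simp [qBinomPoly]
  | m + 1, n + 1, h => by
    rw [qBinomPoly, qBinomPoly_eq_zero m n (by omega),
      qBinomPoly_eq_zero m (n + 1) (by omega)]
    ring

lemma qBinomPoly_key : ∀ m n : ℕ, n ≤ m →
    qBinomPoly m n * (qFac n * qFac (m - n)) = qFac m
  | m, 0, _ => by simp [qBinomPoly, qFac_zero]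
  | 0, n + 1, h => by omega
  | m + 1, n + 1, h => by
    rcases Nat.lt_or_ge n m with hlt | hge
    · obtain ⟨s, rfl⟩ : ∃ s, m = n + 1 + s := ⟨m - (n + 1), by omega⟩
      have h1 := qBinomPoly_key (n + 1 + s) n (by omega)
      have h2 := qBinomPoly_key (n + 1 + s) (n + 1) (by omega)
      rw [show n + 1 + s - n = s + 1 from by omega, qFac_succ s] at h1
      rw [show n + 1 + s - (n + 1) = s from by omega, qFac_succ n] at h2
      rw [qBinomPoly, show n + 1 + s + 1 - (n + 1) = s + 1 from by omega,
        qFac_succ n, qFac_succ s, qFac_succ (n + 1 + s)]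
      linear_combination (X ^ (n + 1) - 1) * h1 + X ^ (n + 1) * (X ^ (s + 1) - 1) * h2
    · have hnm : n = m := by omega
      subst hnm
      have h1 := qBinomPoly_key n n le_rfl
      rw [Nat.sub_self, qFac_zero] at h1
      rw [qBinomPoly, qBinomPoly_eq_zero n (n + 1) (by omega), Nat.sub_self,
        qFac_zero, qFac_succ n]
      linear_combination (X ^ (n + 1) - 1) * h1

lemma qBinomPoly_tri (n i j : ℕ) :
    qBinomPoly (n + i) i * qBinomPoly (n + i + j) j =
      qBinomPoly (i + j) i * qBinomPoly (n + i + j) (i + j) := by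
  have hc : qFac n * qFac i * qFac j ≠ 0 :=
    mul_ne_zero (mul_ne_zero (qFac_ne_zero n) (qFac_ne_zero i)) (qFac_ne_zero j)
  apply mul_right_cancel₀ hc
  have e1 : qBinomPoly (n + i) i * (qFac i * qFac n) = qFac (n + i) := by
    simpa [Nat.add_sub_cancel] using qBinomPoly_key (n + i) i (by omega)
  have e2 : qBinomPoly (n + i + j) j * (qFac j * qFac (n + i)) = qFac (n + i + j) := by
    simpa [Nat.add_sub_cancel] using qBinomPoly_key (n + i + j) j (by omega)
  have e3 : qBinomPoly (i + j) i * (qFac i * qFac j) = qFac (i + j) := by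
    simpa [Nat.add_sub_cancel_left] using qBinomPoly_key (i + j) i (by omega)
  have e4 : qBinomPoly (n + i + j) (i + j) * (qFac (i + j) * qFac n) = qFac (n + i + j) := by
    have h : n + i + j - (i + j) = n := by omega
    simpa [h] using qBinomPoly_key (n + i + j) (i + j) (by omega)
  linear_combination (qBinomPoly (n + i + j) j * qFac j) * e1 + e2
    - (qBinomPoly (n + i + j) (i + j) * qFac n) * e3 - e4

lemma aeval_qBinomPoly {C : Type*} [Field C] (q : C) :
    ∀ m n : ℕ, Polynomial.aeval q (qBinomPoly m n) = qBinomRec q m n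
  | _, 0 => by simp [qBinomPoly, qBinomRec]
  | 0, _ + 1 => by simp [qBinomPoly, qBinomRec]
  | m + 1, n + 1 => by
    simp [qBinomPoly, qBinomRec, aeval_qBinomPoly q m n, aeval_qBinomPoly q m (n + 1)]

lemma qBinomRec_tri {C : Type*} [Field C] (q : C) (n i j : ℕ) :
    qBinomRec q (n + i) i * qBinomRec q (n + i + j) j =
      qBinomRec q (i + j) i * qBinomRec q (n + i + j) (i + j) := by
  have h := congrArg (Polynomial.aeval q) (qBinomPoly_tri n i j)
  simpa [map_mul, aeval_qBinomPoly] using h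

/-- The operators `Θ^(l)` on the twisted power series ring satisfy the
composition rule `Θ^(i) ∘ Θ^(j) = binom(i+j,i)_q · Θ^(i+j)`. -/
theorem thetaHat_comp (C : Type*) [Field C] (S : Type*) [Ring S] [Algebra C S]
    (σ : S →+* S) (q : C) (hq : q ≠ 0) (i j : ℕ) (f : ℕ → S) :
    thetaHat q i (thetaHat q j f) = qBinomRec q (i + j) i • thetaHat q (i + j) f := by
  funext n
  simp only [thetaHat, Pi.smul_apply, smul_smul, ← add_assoc]
  rw [qBinomRec_tri q n i j]
end

section
/- Let A be an associative unital ℂ-algebra and q ∈ ℂ with q ≠ 1 and q not a root of unity. Fix t in the center of A. Define Ĝ(A) as the set of pairs (e, f) with e, f ∈ A, ef = q⁻¹fe, e − 1 and f nilpotent. Then for (e₁,f₁), (e₂,f₂) ∈ Ĝ(A) with {e₁,f₁} and {e₂,f₂} mutually commutative, the pair (e₁e₂, e₁f₂ + f₁) again satisfies (e₁e₂)(e₁f₂+f₁) = q⁻¹(e₁f₂+f₁)(e₁e₂), and e₁e₂ − 1 and e₁f₂ + f₁ are nilpotent. -/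
/-- Sum of `q`-commuting nilpotents is nilpotent. -/
lemma aux_qnilp {A : Type*} [Ring A] [Algebra ℂ A] (q : ℂ) (x y : A)
    (h : y * x = q • (x * y)) (hx : IsNilpotent x) (hy : IsNilpotent y) :
    IsNilpotent (x + y) := by
  obtain ⟨m, hm⟩ := hx
  obtain ⟨k, hk⟩ := hy
  have hpow : ∀ b : ℕ, y ^ b * x = (q ^ b) • (x * y ^ b) := by
    intro b
    induction b with
    | zero => simp
    | succ n ih =>
      rw [pow_succ, mul_assoc, h, mul_smul_comm, ← mul_assoc, ih, smul_mul_assoc,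
        smul_smul, ← pow_succ, mul_assoc]
      rw [← pow_succ, ← pow_succ']
  have key : ∀ n : ℕ, (x + y) ^ n ∈
      Submodule.span ℂ {z : A | ∃ a b : ℕ, a + b = n ∧ z = x ^ a * y ^ b} := by
    intro n
    induction n with
    | zero =>
      exact Submodule.subset_span ⟨0, 0, rfl, by simp⟩
    | succ n ih =>
      rw [pow_succ]
      refine Submodule.span_induction
        (p := fun z _ => z * (x + y) ∈
          Submodule.span ℂ {z : A | ∃ a b : ℕ, a + b = n + 1 ∧ z = x ^ a * y ^ b})
        ?_ ?_ ?_ ?_ ih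
      · rintro z ⟨a, b, hab, rfl⟩
        have : x ^ a * y ^ b * (x + y)
            = (q ^ b) • (x ^ (a + 1) * y ^ b) + x ^ a * y ^ (b + 1) := by
          rw [mul_add, mul_assoc, hpow b, mul_smul_comm, ← mul_assoc, ← pow_succ,
            mul_assoc, ← pow_succ]
        rw [this]
        exact Submodule.add_mem _
          (Submodule.smul_mem _ _ (Submodule.subset_span ⟨a + 1, b, by omega, rfl⟩))
          (Submodule.subset_span ⟨a, b + 1, by omega, rfl⟩)
      · simp
      · intro u v _ _ hu hv
        rw [add_mul]
        exact Submodule.add_mem _ hu hv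
      · intro c u _ hu
        rw [smul_mul_assoc]
        exact Submodule.smul_mem _ _ hu
  refine ⟨m + k, ?_⟩
  have hsub : {z : A | ∃ a b : ℕ, a + b = m + k ∧ z = x ^ a * y ^ b} ⊆ {(0 : A)} := by
    rintro z ⟨a, b, hab, rfl⟩
    have : m ≤ a ∨ k ≤ b := by omega
    rcases this with hma | hkb
    · have : x ^ a = 0 := by
        rw [← Nat.sub_add_cancel hma, pow_add, hm, mul_zero]
      simp [this]
    · have : y ^ b = 0 := by
        rw [← Nat.sub_add_cancel hkb, pow_add, hk, mul_zero]
      simp [this]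
  have := key (m + k)
  have hle : Submodule.span ℂ {z : A | ∃ a b : ℕ, a + b = m + k ∧ z = x ^ a * y ^ b}
      ≤ ⊥ := by
    rw [Submodule.span_le]
    intro z hz
    simpa using hsub hz
  simpa using hle this

/-- Closure of `Ĝ(A) = {(e,f) : ef = q⁻¹fe, e-1 and f nilpotent}` under the
product `(e₁,f₁)·(e₂,f₂) = (e₁e₂, e₁f₂+f₁)`, for mutually commutative pairs. -/
theorem Ghat_closed_under_product (A : Type*) [Ring A] [Algebra ℂ A]
    (q : ℂ) (hq1 : q ≠ 1) (hq : ∀ n : ℕ, 1 ≤ n → q ^ n ≠ 1)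
    (t : A) (ht : ∀ a : A, t * a = a * t)
    (e₁ f₁ e₂ f₂ : A)
    (h1 : e₁ * f₁ = q⁻¹ • (f₁ * e₁)) (h2 : e₂ * f₂ = q⁻¹ • (f₂ * e₂))
    (n1 : IsNilpotent (e₁ - 1)) (n2 : IsNilpotent f₁)
    (n3 : IsNilpotent (e₂ - 1)) (n4 : IsNilpotent f₂)
    (c1 : Commute e₁ e₂) (c2 : Commute e₁ f₂)
    (c3 : Commute f₁ e₂) (c4 : Commute f₁ f₂) :
    (e₁ * e₂) * (e₁ * f₂ + f₁) = q⁻¹ • ((e₁ * f₂ + f₁) * (e₁ * e₂)) ∧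
    IsNilpotent (e₁ * e₂ - 1) ∧ IsNilpotent (e₁ * f₂ + f₁) := by
  refine ⟨?_, ?_, ?_⟩
  · -- the q-commutation relation
    have key1 : e₁ * e₂ * (e₁ * f₂) = q⁻¹ • (e₁ * f₂ * (e₁ * e₂)) := by
      calc e₁ * e₂ * (e₁ * f₂) = e₁ * (e₂ * e₁) * f₂ := by noncomm_ring
        _ = e₁ * (e₁ * e₂) * f₂ := by rw [← c1.eq]
        _ = e₁ * e₁ * (e₂ * f₂) := by noncomm_ring
        _ = q⁻¹ • (e₁ * e₁ * (f₂ * e₂)) := by rw [h2, mul_smul_comm]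
        _ = q⁻¹ • (e₁ * (e₁ * f₂) * e₂) := by noncomm_ring
        _ = q⁻¹ • (e₁ * (f₂ * e₁) * e₂) := by rw [c2.eq]
        _ = q⁻¹ • (e₁ * f₂ * (e₁ * e₂)) := by noncomm_ring
    have key2 : e₁ * e₂ * f₁ = q⁻¹ • (f₁ * (e₁ * e₂)) := by
      calc e₁ * e₂ * f₁ = e₁ * (e₂ * f₁) := by noncomm_ring
        _ = e₁ * (f₁ * e₂) := by rw [← c3.eq]
        _ = (e₁ * f₁) * e₂ := by noncomm_ring
        _ = q⁻¹ • (f₁ * e₁ * e₂) := by rw [h1, smul_mul_assoc]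
        _ = q⁻¹ • (f₁ * (e₁ * e₂)) := by rw [mul_assoc]
    rw [mul_add, add_mul, smul_add, key1, key2]
  · -- nilpotency of e₁e₂ - 1
    have hdecomp : e₁ * e₂ - 1 = e₁ * (e₂ - 1) + (e₁ - 1) := by noncomm_ring
    have ca : Commute e₁ (e₂ - 1) := c1.sub_right (Commute.one_right e₁)
    have na : IsNilpotent (e₁ * (e₂ - 1)) := ca.isNilpotent_mul_left n3
    have cb : Commute (e₁ * (e₂ - 1)) (e₁ - 1) := by
      have h1' : Commute e₁ (e₁ - 1) := (Commute.refl e₁).sub_right (Commute.one_right e₁)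
      have h2' : Commute (e₂ - 1) (e₁ - 1) :=
        (c1.symm.sub_right (Commute.one_right e₂)).sub_left (Commute.one_left (e₁ - 1))
      exact h1'.mul_left h2'
    rw [hdecomp]
    exact cb.isNilpotent_add na n1
  · -- nilpotency of e₁f₂ + f₁
    have nx : IsNilpotent (e₁ * f₂) := c2.isNilpotent_mul_left n4
    rcases eq_or_ne q 0 with hq0 | hq0
    · -- q = 0 : then e₁ * f₁ = 0
      have hzero : e₁ * f₁ = 0 := by rw [h1, hq0, inv_zero, zero_smul]
      have hrel : (e₁ * f₂) * f₁ = (0 : ℂ) • (f₁ * (e₁ * f₂)) := by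
        rw [zero_smul, mul_assoc, ← c4.eq, ← mul_assoc, hzero, zero_mul]
      have := aux_qnilp 0 f₁ (e₁ * f₂) hrel n2 nx
      rwa [add_comm] at this
    · -- q ≠ 0
      have hfe : f₁ * e₁ = q • (e₁ * f₁) := by
        rw [h1, smul_smul, mul_inv_cancel₀ hq0, one_smul]
      have hrel : f₁ * (e₁ * f₂) = q • ((e₁ * f₂) * f₁) := by
        calc f₁ * (e₁ * f₂) = (f₁ * e₁) * f₂ := by rw [mul_assoc]
          _ = q • (e₁ * f₁ * f₂) := by rw [hfe, smul_mul_assoc]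
          _ = q • (e₁ * (f₂ * f₁)) := by rw [mul_assoc, c4.eq]
          _ = q • ((e₁ * f₂) * f₁) := by rw [mul_assoc]
      exact aux_qnilp q (e₁ * f₂) f₁ hrel nx n2
end

section
/- Let A be a commutative ring and define Ĝ_II(A) = {(e, b(W)) ∈ A × A[[W]] : e − 1 and all coefficients of b(W) − 1 are nilpotent}, with multiplication (e₁, b₁(W)) ⋆ (e₂, b₂(W)) = (e₁e₂, b₁(e₂W + (e₂−1)t)·b₂(W)) for a fixed t ∈ A. Then Ĝ_II(A) is a group: the operation is associative, (1,1) is the unit, and (e, b(W))⁻¹ = (e⁻¹, b(e⁻¹W + (e⁻¹−1)t)⁻¹). -/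
/-- Substitution of the linear polynomial `uW + c` (with `c` nilpotent) into a
power series `b(W)`: the coefficient of `Wⁿ` is `Σₖ bₖ · coeff_n((uW+c)ᵏ)`,
a finite sum since `c` is nilpotent. -/
noncomputable def substLin {A : Type*} [CommRing A] (u c : A)
    (b : PowerSeries A) : PowerSeries A :=
  PowerSeries.mk fun n => ∑ᶠ k : ℕ, PowerSeries.coeff k b *
    ((Polynomial.C u * Polynomial.X + Polynomial.C c) ^ k).coeff n

section Aux

open Polynomial Finset

variable {A : Type*} [CommRing A]

/-- Coefficient of `(uX + c)^k`. -/
lemma coeff_lin_pow (u c : A) (k n : ℕ) :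
    ((C u * X + C c) ^ k).coeff n =
      if n ≤ k then u ^ n * c ^ (k - n) * k.choose n else 0 := by
  rw [add_pow]
  have h : ∀ i, (C u * X) ^ i * C c ^ (k - i) * (k.choose i : A[X]) =
      C (u ^ i * c ^ (k - i) * (k.choose i : A)) * X ^ i := by
    intro i
    rw [mul_pow, ← C_pow, ← C_pow, ← C_eq_natCast, C_mul, C_mul]
    ring
  simp only [h, finset_sum_coeff, coeff_C_mul, coeff_X_pow, mul_ite, mul_one, mul_zero]
  rw [Finset.sum_ite_eq (Finset.range (k + 1)) n
    (fun i => u ^ i * c ^ (k - i) * (k.choose i : A))]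
  simp [Nat.lt_succ_iff]

lemma coeff_lin_pow_eq_zero {c : A} {m : ℕ} (hc : c ^ (m + 1) = 0) (u : A)
    {n k : ℕ} (hk : n + m + 1 ≤ k) :
    ((C u * X + C c) ^ k).coeff n = 0 := by
  rw [coeff_lin_pow, if_pos (by omega)]
  have h : c ^ (k - n) = c ^ (m + 1) * c ^ (k - n - (m + 1)) := by
    rw [← pow_add]; congr 1; omega
  simp [h, hc]

/-- Finite-sum formula for the coefficients of `substLin`. -/
lemma coeff_substLin {c : A} {m : ℕ} (hc : c ^ (m + 1) = 0) (u : A)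
    {n N : ℕ} (hN : n + m + 1 ≤ N) (b : PowerSeries A) :
    PowerSeries.coeff n (substLin u c b) =
      ∑ k ∈ Finset.range N, PowerSeries.coeff k b * ((C u * X + C c) ^ k).coeff n := by
  rw [substLin, PowerSeries.coeff_mk]
  apply finsum_eq_finset_sum_of_support_subset
  intro k hk
  simp only [Function.mem_support, ne_eq, not_not] at hk ⊢
  by_contra h
  apply hk
  rw [coeff_lin_pow_eq_zero hc u (by
    simp only [Finset.coe_range, Set.mem_Iio, not_lt] at *
    omega), mul_zero]

/-- Coefficient of a polynomial composed with `uX + c`. -/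
lemma coeff_comp_lin (u c : A) {f : A[X]} {M : ℕ} (hf : f.natDegree < M) (n : ℕ) :
    (f.comp (C u * X + C c)).coeff n =
      ∑ k ∈ Finset.range M, f.coeff k * ((C u * X + C c) ^ k).coeff n := by
  rw [Polynomial.comp, Polynomial.eval₂_eq_sum_range' (C : A →+* A[X]) hf]
  · simp [finset_sum_coeff, coeff_C_mul]

lemma natDegree_trunc_lt (b : PowerSeries A) {N : ℕ} (hN : 0 < N) :
    (PowerSeries.trunc N b).natDegree < N := by
  by_cases h0 : PowerSeries.trunc N b = 0
  · simpa [h0]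
  · rw [Polynomial.natDegree_lt_iff_degree_lt h0]
    exact_mod_cast PowerSeries.degree_trunc_lt b N

/-- `substLin` computed via truncation and polynomial composition. -/
lemma coeff_substLin_eq_comp {c : A} {m : ℕ} (hc : c ^ (m + 1) = 0) (u : A)
    {n N : ℕ} (hN : n + m + 1 ≤ N) (b : PowerSeries A) :
    PowerSeries.coeff n (substLin u c b) =
      ((PowerSeries.trunc N b).comp (C u * X + C c)).coeff n := by
  rw [coeff_substLin hc u hN b,
    coeff_comp_lin u c (natDegree_trunc_lt b (by omega)) n]
  apply Finset.sum_congr rfl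
  intro k hk
  rw [PowerSeries.coeff_trunc, if_pos (Finset.mem_range.mp hk)]

lemma substLin_one {c : A} (hc : IsNilpotent c) (u : A) :
    substLin u c (1 : PowerSeries A) = 1 := by
  obtain ⟨m, hm⟩ := hc
  have hc' : c ^ (m + 1) = 0 := by rw [pow_succ']; simp [hm]
  ext n
  rw [coeff_substLin_eq_comp hc' u (le_refl (n + m + 1)) 1,
    PowerSeries.trunc_one, Polynomial.one_comp]
  simp [PowerSeries.coeff_one, Polynomial.coeff_one, eq_comm]

lemma substLin_add {c : A} (hc : IsNilpotent c) (u : A) (b₁ b₂ : PowerSeries A) :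
    substLin u c (b₁ + b₂) = substLin u c b₁ + substLin u c b₂ := by
  obtain ⟨m, hm⟩ := hc
  have hc' : c ^ (m + 1) = 0 := by rw [pow_succ']; simp [hm]
  ext n
  rw [map_add, coeff_substLin hc' u (le_refl (n + m + 1)),
    coeff_substLin hc' u (le_refl (n + m + 1)),
    coeff_substLin hc' u (le_refl (n + m + 1)), ← Finset.sum_add_distrib]
  apply Finset.sum_congr rfl
  intro k _
  rw [map_add, add_mul]

lemma substLin_mul {c : A} (hc : IsNilpotent c) (u : A) (b₁ b₂ : PowerSeries A) :
    substLin u c (b₁ * b₂) = substLin u c b₁ * substLin u c b₂ := by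
  obtain ⟨m, hm⟩ := hc
  have hc' : c ^ (m + 1) = 0 := by rw [pow_succ']; simp [hm]
  ext n
  set N := n + m + 1 with hNdef
  set p : A[X] := C u * X + C c with hp
  -- the truncations of `b₁ * b₂` and `trunc N b₁ * trunc N b₂` agree below `N`
  have hdcoeff : ∀ k < N, (PowerSeries.trunc N (b₁ * b₂)
      - PowerSeries.trunc N b₁ * PowerSeries.trunc N b₂).coeff k = 0 := by
    intro k hk
    rw [Polynomial.coeff_sub, PowerSeries.coeff_trunc, if_pos hk,
      Polynomial.coeff_mul, PowerSeries.coeff_mul, sub_eq_zero]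
    apply Finset.sum_congr rfl
    intro ij hij
    rw [Finset.HasAntidiagonal.mem_antidiagonal] at hij
    rw [PowerSeries.coeff_trunc, PowerSeries.coeff_trunc,
      if_pos (by omega), if_pos (by omega)]
  -- hence their compositions with `p` have the same `n`-th coefficient
  have hcomp : ((PowerSeries.trunc N (b₁ * b₂)).comp p).coeff n
      = ((PowerSeries.trunc N b₁ * PowerSeries.trunc N b₂).comp p).coeff n := by
    rw [← sub_eq_zero, ← Polynomial.coeff_sub, ← Polynomial.sub_comp]
    set d := PowerSeries.trunc N (b₁ * b₂) - PowerSeries.trunc N b₁ * PowerSeries.trunc N b₂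
    rw [coeff_comp_lin u c (lt_max_iff.mpr (Or.inr (Nat.lt_succ_self _)) :
      d.natDegree < max N (d.natDegree + 1)) n]
    apply Finset.sum_eq_zero
    intro k _
    by_cases hkN : k < N
    · rw [hdcoeff k hkN, zero_mul]
    · rw [coeff_lin_pow_eq_zero hc' u (by omega), mul_zero]
  rw [coeff_substLin_eq_comp hc' u (le_refl N) (b₁ * b₂), hcomp,
    Polynomial.mul_comp, Polynomial.coeff_mul, PowerSeries.coeff_mul]
  apply Finset.sum_congr rfl
  intro ij hij
  rw [Finset.HasAntidiagonal.mem_antidiagonal] at hij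
  rw [coeff_substLin_eq_comp hc' u (show ij.1 + m + 1 ≤ N by omega) b₁,
    coeff_substLin_eq_comp hc' u (show ij.2 + m + 1 ≤ N by omega) b₂]

lemma substLin_id (b : PowerSeries A) : substLin 1 0 b = b := by
  ext n
  have h0 : (0 : A) ^ (0 + 1) = 0 := by simp
  rw [coeff_substLin h0 1 (le_refl (n + 0 + 1)) b]
  rw [Finset.sum_eq_single n]
  · rw [coeff_lin_pow, if_pos (le_refl n)]
    simp
  · intro k hk hkn
    rw [Finset.mem_range] at hk
    rw [coeff_lin_pow]
    rcases le_or_gt n k with h | h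
    · have : k = n := by omega
      exact absurd this hkn
    · rw [if_neg (by omega), mul_zero]
  · intro h
    exact absurd (Finset.mem_range.mpr (by omega)) h

lemma substLin_comp {c₁ c₂ : A} (hc₁ : IsNilpotent c₁) (hc₂ : IsNilpotent c₂)
    (u₁ u₂ : A) (b : PowerSeries A) :
    substLin u₂ c₂ (substLin u₁ c₁ b) = substLin (u₁ * u₂) (u₁ * c₂ + c₁) b := by
  obtain ⟨m₁, hm₁⟩ := hc₁
  obtain ⟨m₂, hm₂⟩ := hc₂
  have hc₁' : c₁ ^ (m₁ + 1) = 0 := by rw [pow_succ']; simp [hm₁]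
  have hc₂' : c₂ ^ (m₂ + 1) = 0 := by rw [pow_succ']; simp [hm₂]
  have hc₃ : IsNilpotent (u₁ * c₂ + c₁) := by
    apply Commute.isNilpotent_add (Commute.all _ _)
    · exact Commute.isNilpotent_mul_left (Commute.all _ _) ⟨m₂, hm₂⟩
    · exact ⟨m₁, hm₁⟩
  obtain ⟨m₃, hm₃⟩ := hc₃
  have hc₃' : (u₁ * c₂ + c₁) ^ (m₃ + 1) = 0 := by rw [pow_succ']; simp [hm₃]
  ext n
  set N₂ := n + m₂ + 1 with hN₂
  set K := n + m₁ + m₂ + m₃ + 3 with hK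
  rw [coeff_substLin hc₂' u₂ (le_refl N₂) (substLin u₁ c₁ b)]
  have hterm : ∀ k ∈ Finset.range N₂,
      PowerSeries.coeff k (substLin u₁ c₁ b) * ((C u₂ * X + C c₂) ^ k).coeff n
      = ∑ j ∈ Finset.range K, PowerSeries.coeff j b *
          (((C u₁ * X + C c₁) ^ j).coeff k * ((C u₂ * X + C c₂) ^ k).coeff n) := by
    intro k hk
    rw [Finset.mem_range] at hk
    rw [coeff_substLin hc₁' u₁ (show k + m₁ + 1 ≤ K by omega) b, Finset.sum_mul]
    apply Finset.sum_congr rfl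
    intro j _
    ring
  rw [Finset.sum_congr rfl hterm, Finset.sum_comm]
  rw [coeff_substLin hc₃' (u₁ * u₂) (show n + m₃ + 1 ≤ K by omega) b]
  apply Finset.sum_congr rfl
  intro j _
  rw [← Finset.mul_sum]
  congr 1
  -- inner sum is the coefficient of a composition
  have hM : ((C u₁ * X + C c₁) ^ j).natDegree < max N₂ (((C u₁ * X + C c₁) ^ j).natDegree + 1) :=
    lt_max_iff.mpr (Or.inr (Nat.lt_succ_self _))
  have hext : ∑ k ∈ Finset.range N₂,
      ((C u₁ * X + C c₁) ^ j).coeff k * ((C u₂ * X + C c₂) ^ k).coeff n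
      = ∑ k ∈ Finset.range (max N₂ (((C u₁ * X + C c₁) ^ j).natDegree + 1)),
      ((C u₁ * X + C c₁) ^ j).coeff k * ((C u₂ * X + C c₂) ^ k).coeff n := by
    apply Finset.sum_subset
    · exact Finset.range_subset_range.mpr (le_max_left _ _)
    · intro k _ hk
      rw [Finset.mem_range] at hk
      rw [coeff_lin_pow_eq_zero hc₂' u₂ (by omega), mul_zero]
  rw [hext, ← coeff_comp_lin u₂ c₂ hM n, Polynomial.pow_comp]
  have hcomp : (C u₁ * X + C c₁).comp (C u₂ * X + C c₂)
      = C (u₁ * u₂) * X + C (u₁ * c₂ + c₁) := by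
    simp only [Polynomial.add_comp, Polynomial.mul_comp, Polynomial.C_comp,
      Polynomial.X_comp, Polynomial.C_mul, Polynomial.C_add]
    ring
  rw [hcomp]

lemma substLin_sub_one {c : A} (hc : IsNilpotent c) (u : A) (b : PowerSeries A) :
    substLin u c b - 1 = substLin u c (b - 1) := by
  have h := substLin_add hc u (b - 1) 1
  rw [sub_add_cancel, substLin_one hc u] at h
  rw [h]; ring

lemma coeff_substLin_nilpotent {c : A} (hc : IsNilpotent c) (u : A)
    {b : PowerSeries A} (hb : ∀ n, IsNilpotent (PowerSeries.coeff n b)) (n : ℕ) :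
    IsNilpotent (PowerSeries.coeff n (substLin u c b)) := by
  obtain ⟨m, hm⟩ := hc
  have hc' : c ^ (m + 1) = 0 := by rw [pow_succ']; simp [hm]
  rw [coeff_substLin hc' u (le_refl (n + m + 1)) b]
  apply isNilpotent_sum
  intro k _
  exact Commute.isNilpotent_mul_right (Commute.all _ _) (hb k)

lemma coeff_mul_nilpotent_left {f g : PowerSeries A}
    (hf : ∀ n, IsNilpotent (PowerSeries.coeff n f)) (n : ℕ) :
    IsNilpotent (PowerSeries.coeff n (f * g)) := by
  rw [PowerSeries.coeff_mul]
  apply isNilpotent_sum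
  intro ij _
  exact Commute.isNilpotent_mul_right (Commute.all _ _) (hf ij.1)

lemma isUnit_of_coeff_nilpotent {b : PowerSeries A}
    (hb : ∀ n, IsNilpotent (PowerSeries.coeff n (b - 1))) : IsUnit b := by
  rw [PowerSeries.isUnit_iff_constantCoeff]
  have h : PowerSeries.constantCoeff b = 1 + PowerSeries.coeff 0 (b - 1) := by
    rw [← PowerSeries.coeff_zero_eq_constantCoeff_apply, map_sub]
    simp
  rw [h]
  exact IsNilpotent.isUnit_one_add (hb 0)

lemma coeff_ringInverse_nilpotent {g : PowerSeries A} (hg : IsUnit g)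
    (h : ∀ n, IsNilpotent (PowerSeries.coeff n (g - 1))) (n : ℕ) :
    IsNilpotent (PowerSeries.coeff n (Ring.inverse g - 1)) := by
  have key : Ring.inverse g - 1 = (1 - g) * Ring.inverse g := by
    rw [sub_mul, one_mul, Ring.mul_inverse_cancel g hg]
  rw [key]
  apply coeff_mul_nilpotent_left
  intro k
  have : PowerSeries.coeff k (1 - g) = -(PowerSeries.coeff k (g - 1)) := by
    rw [← map_neg]; congr 1; ring
  rw [this]
  exact (h k).neg

end Aux

/-- `Ĝ_II(A)`: pairs `(e, b(W))` with `e - 1` and all coefficients of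
`b(W) - 1` nilpotent. -/
def GII (A : Type*) [CommRing A] : Set (A × PowerSeries A) :=
  {p | IsNilpotent (p.1 - 1) ∧ ∀ n : ℕ, IsNilpotent (PowerSeries.coeff n (p.2 - 1))}

/-- The product `(e₁,b₁(W)) ⋆ (e₂,b₂(W)) = (e₁e₂, b₁(e₂W + (e₂-1)t)·b₂(W))`. -/
noncomputable def mulII {A : Type*} [CommRing A] (t : A)
    (x y : A × PowerSeries A) : A × PowerSeries A :=
  (x.1 * y.1, substLin y.1 ((y.1 - 1) * t) x.2 * y.2)

/-- The inverse `(e, b(W))⁻¹ = (e⁻¹, b(e⁻¹W + (e⁻¹-1)t)⁻¹)`. -/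
noncomputable def invII {A : Type*} [CommRing A] (t : A)
    (x : A × PowerSeries A) : A × PowerSeries A :=
  (Ring.inverse x.1,
    Ring.inverse (substLin (Ring.inverse x.1) ((Ring.inverse x.1 - 1) * t) x.2))

/-- `Ĝ_II(A)` is a group under `⋆`: it is closed under the product, the
product is associative, `(1,1)` is a two-sided unit, and
`(e⁻¹, b(e⁻¹W + (e⁻¹-1)t)⁻¹)` is a two-sided inverse. -/
theorem GII_is_group (A : Type*) [CommRing A] (t : A) :
    (∀ x ∈ GII A, ∀ y ∈ GII A, mulII t x y ∈ GII A) ∧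
    (∀ x ∈ GII A, ∀ y ∈ GII A, ∀ z ∈ GII A,
      mulII t (mulII t x y) z = mulII t x (mulII t y z)) ∧
    (((1 : A), (1 : PowerSeries A)) ∈ GII A ∧
      ∀ x ∈ GII A, mulII t x (1, 1) = x ∧ mulII t (1, 1) x = x) ∧
    (∀ x ∈ GII A, invII t x ∈ GII A ∧
      mulII t x (invII t x) = (1, 1) ∧ mulII t (invII t x) x = (1, 1)) := by
  refine ⟨?_, ?_, ⟨?_, ?_⟩, ?_⟩
  -- closure
  · rintro x ⟨hx1, hx2⟩ y ⟨hy1, hy2⟩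
    have hc : IsNilpotent ((y.1 - 1) * t) :=
      Commute.isNilpotent_mul_right (Commute.all _ _) hy1
    constructor
    · show IsNilpotent (x.1 * y.1 - 1)
      have h : x.1 * y.1 - 1 = (x.1 - 1) * y.1 + (y.1 - 1) := by ring
      rw [h]
      exact Commute.isNilpotent_add (Commute.all _ _)
        (Commute.isNilpotent_mul_right (Commute.all _ _) hx1) hy1
    · intro n
      show IsNilpotent (PowerSeries.coeff n
        (substLin y.1 ((y.1 - 1) * t) x.2 * y.2 - 1))
      have h : substLin y.1 ((y.1 - 1) * t) x.2 * y.2 - 1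
          = (substLin y.1 ((y.1 - 1) * t) x.2 - 1) * y.2 + (y.2 - 1) := by ring
      rw [h, map_add]
      apply Commute.isNilpotent_add (Commute.all _ _)
      · apply coeff_mul_nilpotent_left
        intro k
        rw [substLin_sub_one hc]
        exact coeff_substLin_nilpotent hc _ hx2 k
      · exact hy2 n
  -- associativity
  · rintro x ⟨hx1, hx2⟩ y ⟨hy1, hy2⟩ z ⟨hz1, hz2⟩
    have hcy : IsNilpotent ((y.1 - 1) * t) :=
      Commute.isNilpotent_mul_right (Commute.all _ _) hy1
    have hcz : IsNilpotent ((z.1 - 1) * t) :=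
      Commute.isNilpotent_mul_right (Commute.all _ _) hz1
    simp only [mulII]
    refine Prod.ext (mul_assoc _ _ _) ?_
    show substLin z.1 ((z.1 - 1) * t)
        (substLin y.1 ((y.1 - 1) * t) x.2 * y.2) * z.2
      = substLin (y.1 * z.1) ((y.1 * z.1 - 1) * t) x.2
        * (substLin z.1 ((z.1 - 1) * t) y.2 * z.2)
    rw [substLin_mul hcz, substLin_comp hcy hcz, mul_assoc]
    have harg : y.1 * ((z.1 - 1) * t) + (y.1 - 1) * t = (y.1 * z.1 - 1) * t := by ring
    rw [harg]
  -- identity membership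
  · exact ⟨by simp, fun n => by simp⟩
  -- identity laws
  · rintro x ⟨hx1, hx2⟩
    have hcx : IsNilpotent ((x.1 - 1) * t) :=
      Commute.isNilpotent_mul_right (Commute.all _ _) hx1
    constructor
    · refine Prod.ext (mul_one x.1) ?_
      show substLin 1 (((1 : A) - 1) * t) x.2 * 1 = x.2
      have h0 : ((1 : A) - 1) * t = 0 := by ring
      rw [h0, mul_one, substLin_id]
    · refine Prod.ext (one_mul x.1) ?_
      show substLin x.1 ((x.1 - 1) * t) 1 * x.2 = x.2
      rw [substLin_one hcx, one_mul]
  -- inverses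
  · rintro x ⟨hx1, hx2⟩
    have hxu : IsUnit x.1 := by
      have h : x.1 = 1 + (x.1 - 1) := by ring
      rw [h]; exact hx1.isUnit_one_add
    have hie : x.1 * Ring.inverse x.1 = 1 := Ring.mul_inverse_cancel x.1 hxu
    have hei : Ring.inverse x.1 * x.1 = 1 := Ring.inverse_mul_cancel x.1 hxu
    have heinv_nil : IsNilpotent (Ring.inverse x.1 - 1) := by
      have h : Ring.inverse x.1 - 1 = -(Ring.inverse x.1 * (x.1 - 1)) := by
        rw [mul_sub, mul_one, hei]; ring
      rw [h]
      exact (Commute.isNilpotent_mul_left (Commute.all _ _) hx1).neg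
    have hc' : IsNilpotent ((Ring.inverse x.1 - 1) * t) :=
      Commute.isNilpotent_mul_right (Commute.all _ _) heinv_nil
    have hcx : IsNilpotent ((x.1 - 1) * t) :=
      Commute.isNilpotent_mul_right (Commute.all _ _) hx1
    set g := substLin (Ring.inverse x.1) ((Ring.inverse x.1 - 1) * t) x.2 with hgdef
    have hg1 : ∀ n, IsNilpotent (PowerSeries.coeff n (g - 1)) := by
      intro n
      rw [hgdef, substLin_sub_one hc']
      exact coeff_substLin_nilpotent hc' _ hx2 n
    have hgu : IsUnit g := isUnit_of_coeff_nilpotent hg1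
    refine ⟨⟨heinv_nil, coeff_ringInverse_nilpotent hgu hg1⟩, ?_, ?_⟩
    · refine Prod.ext hie ?_
      exact Ring.mul_inverse_cancel g hgu
    · refine Prod.ext hei ?_
      show substLin x.1 ((x.1 - 1) * t) (Ring.inverse g) * x.2 = 1
      have hSg : substLin x.1 ((x.1 - 1) * t) g = x.2 := by
        rw [hgdef, substLin_comp hc' hcx]
        have harg : Ring.inverse x.1 * ((x.1 - 1) * t) + (Ring.inverse x.1 - 1) * t
            = (Ring.inverse x.1 * x.1 - 1) * t := by ring
        rw [harg, hei]
        have h0 : ((1 : A) - 1) * t = 0 := by ring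
        rw [h0, substLin_id]
      have hk : x.2 * substLin x.1 ((x.1 - 1) * t) (Ring.inverse g) = 1 := by
        rw [← hSg, ← substLin_mul hcx, Ring.mul_inverse_cancel g hgu, substLin_one hcx]
      rw [mul_comm]
      exact hk
end

section
/- Let A be an associative unital algebra over ℂ, q ∈ ℂ not a root of unity, t central in A, and e, f ∈ A with ef = q⁻¹fe, e invertible. Let b(W) ∈ A[[W]] and α ∈ ℂ. Set 𝒜 = (e(t+W)+f)Q + X and 𝒵 = Σ_{n≥0} X^n C_q(α,n) (e(t+W)+f)^{−n} Q^{α−n} b(W) in the algebra of formal series in X, W over A adjoined symbols Q^β (β ∈ α+ℤ ∪ ℤ) satisfying Q^β Q^γ = Q^{β+γ}, Q^β X = q^β X Q^β, Q^β central over A[[W]]. Assume e(t+W)+f is invertible. Then 𝒜𝒵 = 𝒵𝒜 if and only if [e(t+W)+f, b(W)] = 0. -/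
open Complex

/-- The q-number `[β]_q = (q^β - 1)/(q - 1)` for a complex exponent. -/
noncomputable def qNum (q β : ℂ) : ℂ := (q ^ β - 1) / (q - 1)

/-- The generalized q-binomial coefficient `C_q(α,n)`. -/
noncomputable def qBinomC (q α : ℂ) (n : ℕ) : ℂ :=
  (∏ i ∈ Finset.range n, qNum q (α - i)) / (∏ i ∈ Finset.range n, qNum q (i + 1))

/-- The ambient algebra `F(ℕ, A[[W]])[[X]]`: an element is given by its
sequence of `X`-coefficients, each a function `ℕ → A[[W]]`.  The
multiplication is twisted by the shift operator `Σ` on `F(ℕ, A[[W]])`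
(rule `aX = XΣ(a)`), so that the symbols `Q^β : n ↦ q^(nβ)` satisfy
`Q^β Q^γ = Q^(β+γ)` and `Q^β X = q^β X Q^β`, and `Q^β` is central over
`A[[W]]`. -/
noncomputable def mulT {A : Type*} [Ring A]
    (F G : ℕ → ℕ → PowerSeries A) : ℕ → ℕ → PowerSeries A :=
  fun i n => ∑ p ∈ Finset.HasAntidiagonal.antidiagonal i, F p.1 (n + p.2) * G p.2 n

lemma mulT_left {A : Type*} [Ring A] (F G : ℕ → ℕ → PowerSeries A)
    (a : ℕ → PowerSeries A)
    (hF0 : ∀ m, F 0 m = a m) (hF1 : ∀ m, F 1 m = 1)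
    (hF : ∀ i m, 2 ≤ i → F i m = 0) (j n : ℕ) :
    mulT F G (j+1) n = a (n+(j+1)) * G (j+1) n + G j n := by
  unfold mulT
  have h : ∀ p ∈ Finset.HasAntidiagonal.antidiagonal (j+1),
      F p.1 (n + p.2) * G p.2 n
        = (if p = ((0:ℕ), j+1) then a (n+(j+1)) * G (j+1) n else 0)
          + (if p = ((1:ℕ), j) then (1 : PowerSeries A) * G j n else 0) := by
    intro p hp
    rw [Finset.HasAntidiagonal.mem_antidiagonal] at hp
    obtain ⟨p1, p2⟩ := p
    simp only [Prod.mk.injEq] at hp ⊢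
    rcases Nat.eq_zero_or_pos p1 with h0|h0
    · subst h0
      have : p2 = j+1 := by omega
      subst this
      simp [hF0]
    rcases eq_or_ne p1 1 with h1|h1
    · subst h1
      have : p2 = j := by omega
      subst this
      simp [hF1]
    · rw [hF p1 _ (by omega), zero_mul,
        if_neg (by rintro ⟨h, -⟩; omega), if_neg (by rintro ⟨h, -⟩; exact h1 h), add_zero]
  rw [Finset.sum_congr rfl h, Finset.sum_add_distrib, Finset.sum_ite_eq',
    Finset.sum_ite_eq', if_pos (Finset.HasAntidiagonal.mem_antidiagonal.2 (by omega)),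
    if_pos (Finset.HasAntidiagonal.mem_antidiagonal.2 (by omega)), one_mul]

lemma mulT_right {A : Type*} [Ring A] (F G : ℕ → ℕ → PowerSeries A)
    (a : ℕ → PowerSeries A)
    (hF0 : ∀ m, F 0 m = a m) (hF1 : ∀ m, F 1 m = 1)
    (hF : ∀ i m, 2 ≤ i → F i m = 0) (j n : ℕ) :
    mulT G F (j+1) n = G (j+1) n * a n + G j (n+1) := by
  unfold mulT
  have h : ∀ p ∈ Finset.HasAntidiagonal.antidiagonal (j+1),
      G p.1 (n + p.2) * F p.2 n
        = (if p = ((j+1:ℕ), 0) then G (j+1) (n+0) * a n else 0)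
          + (if p = ((j:ℕ), 1) then G j (n+1) * (1 : PowerSeries A) else 0) := by
    intro p hp
    rw [Finset.HasAntidiagonal.mem_antidiagonal] at hp
    obtain ⟨p1, p2⟩ := p
    simp only [Prod.mk.injEq] at hp ⊢
    rcases Nat.eq_zero_or_pos p2 with h0|h0
    · subst h0
      have : p1 = j+1 := by omega
      subst this
      simp [hF0]
    rcases eq_or_ne p2 1 with h1|h1
    · subst h1
      have : p1 = j := by omega
      subst this
      simp [hF1]
    · rw [hF p2 _ (by omega), mul_zero,
        if_neg (by rintro ⟨-, h⟩; omega), if_neg (by rintro ⟨-, h⟩; exact h1 h), add_zero]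
  rw [Finset.sum_congr rfl h, Finset.sum_add_distrib, Finset.sum_ite_eq',
    Finset.sum_ite_eq', if_pos (Finset.HasAntidiagonal.mem_antidiagonal.2 (by omega)),
    if_pos (Finset.HasAntidiagonal.mem_antidiagonal.2 (by omega)), mul_one, add_zero]
lemma q1ne {q : ℂ} (hq : ∀ n : ℕ, 1 ≤ n → q ^ n ≠ 1) : q - 1 ≠ 0 := by
  have := hq 1 le_rfl; simpa [sub_ne_zero] using this

lemma qNumNatNe {q : ℂ} (hq : ∀ n : ℕ, 1 ≤ n → q ^ n ≠ 1) (j : ℕ) :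
    qNum q ((j:ℂ)+1) ≠ 0 := by
  have h1 : q ^ ((j:ℂ)+1) = q ^ (j+1) := by
    rw [show ((j:ℂ)+1) = ((j+1 : ℕ) : ℂ) by push_cast; ring, Complex.cpow_natCast]
  have h2 := hq (j+1) (by omega)
  rw [qNum, h1]
  exact div_ne_zero (sub_ne_zero.2 h2) (q1ne hq)

lemma qBinom_rec {q α : ℂ} (hq : ∀ n : ℕ, 1 ≤ n → q ^ n ≠ 1) (j : ℕ) :
    qBinomC q α (j+1) * (q ^ ((j:ℂ)+1) - 1) = qBinomC q α j * (q ^ (α - j) - 1) := by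
  have hd : ∏ i ∈ Finset.range j, qNum q ((i:ℂ) + 1) ≠ 0 :=
    Finset.prod_ne_zero_iff.2 fun i _ => qNumNatNe hq i
  have h1 : qNum q ((j:ℂ)+1) ≠ 0 := qNumNatNe hq j
  have hq1 : q - 1 ≠ 0 := q1ne hq
  have e1 : q ^ ((j:ℂ)+1) - 1 = (q - 1) * qNum q ((j:ℂ)+1) := by
    rw [qNum]; field_simp
  have e2 : q ^ (α - (j:ℂ)) - 1 = (q - 1) * qNum q (α - j) := by
    rw [qNum]; field_simp
  rw [qBinomC, qBinomC, Finset.prod_range_succ, Finset.prod_range_succ, e1, e2]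
  field_simp

/-- `𝒜𝒵 = 𝒵𝒜` iff `[e(t+W)+f, b(W)] = 0`, where
`𝒜 = (e(t+W)+f)Q + X` and
`𝒵 = Σ_n Xⁿ C_q(α,n) (e(t+W)+f)⁻ⁿ Q^(α-n) b(W)`. -/
theorem AZ_comm_iff_comm (A : Type*) [Ring A] [Algebra ℂ A]
    (q : ℂ) (hq0 : q ≠ 0) (hq : ∀ n : ℕ, 1 ≤ n → q ^ n ≠ 1) (α : ℂ)
    (t e f : A) (ht : ∀ a : A, t * a = a * t)
    (hef : e * f = q⁻¹ • (f * e)) (he : IsUnit e)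
    (b : PowerSeries A) (u : (PowerSeries A)ˣ)
    (hu : (u : PowerSeries A)
      = PowerSeries.C e * (PowerSeries.C t + PowerSeries.X)
        + PowerSeries.C f) :
    (mulT
        (fun i n => if i = 0 then
            (u : PowerSeries A) * algebraMap ℂ (PowerSeries A) (q ^ (n : ℂ))
          else if i = 1 then 1 else 0)
        (fun i n => algebraMap ℂ (PowerSeries A)
            (qBinomC q α i * q ^ ((n : ℂ) * (α - i)))
          * ((u⁻¹ ^ i : (PowerSeries A)ˣ) : PowerSeries A) * b)
      = mulT
        (fun i n => algebraMap ℂ (PowerSeries A)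
            (qBinomC q α i * q ^ ((n : ℂ) * (α - i)))
          * ((u⁻¹ ^ i : (PowerSeries A)ˣ) : PowerSeries A) * b)
        (fun i n => if i = 0 then
            (u : PowerSeries A) * algebraMap ℂ (PowerSeries A) (q ^ (n : ℂ))
          else if i = 1 then 1 else 0)) ↔
    Commute (u : PowerSeries A) b := by
  have hsmul : ∀ (s : ℂ) (x : PowerSeries A),
      algebraMap ℂ (PowerSeries A) s * x = s • x := fun s x => (Algebra.smul_def s x).symm
  have hsmul' : ∀ (s : ℂ) (x : PowerSeries A),
      x * algebraMap ℂ (PowerSeries A) s = s • x := fun s x => by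
    rw [← Algebra.commutes, Algebra.smul_def]
  constructor
  · intro h
    have h00 := congrFun (congrFun h 0) 0
    simp only [mulT, Finset.Nat.antidiagonal_zero, Finset.sum_singleton] at h00
    simp only [if_pos rfl, qBinomC, Finset.range_zero, Finset.prod_empty, Nat.cast_zero,
      sub_zero, zero_mul, Complex.cpow_zero, div_one, one_mul, mul_one, pow_zero,
      Units.val_one, map_one, add_zero] at h00
    exact h00
  · intro hC
    funext i n
    cases i with
    | zero =>
      simp only [mulT, Finset.Nat.antidiagonal_zero, Finset.sum_singleton, reduceIte,
        pow_zero, Units.val_one, mul_one, add_zero]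
      simp only [hsmul, hsmul', mul_smul_comm, smul_mul_assoc, smul_smul]
      rw [hC.eq]
      congr 1
      ring
    | succ j =>
      rw [mulT_left _ _ (fun m => (u : PowerSeries A) * algebraMap ℂ (PowerSeries A) (q ^ (m : ℂ)))
        (fun m => rfl) (fun m => rfl) (fun i m hi => by rw [if_neg (by omega), if_neg (by omega)]),
        mulT_right _ _ (fun m => (u : PowerSeries A) * algebraMap ℂ (PowerSeries A) (q ^ (m : ℂ)))
        (fun m => rfl) (fun m => rfl) (fun i m hi => by rw [if_neg (by omega), if_neg (by omega)])]
      simp only [hsmul, hsmul', mul_smul_comm, smul_mul_assoc, smul_smul, mul_assoc]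
      have key1 : (↑u : PowerSeries A) * (↑(u⁻¹ ^ (j+1)) * b) = ↑(u⁻¹ ^ j) * b := by
        rw [pow_succ', Units.val_mul, ← mul_assoc, ← mul_assoc, Units.mul_inv, one_mul]
      have key2 : (↑(u⁻¹ ^ (j+1)) : PowerSeries A) * (b * ↑u) = ↑(u⁻¹ ^ j) * b := by
        rw [← hC.eq, pow_succ, Units.val_mul, mul_assoc]
        congr 1
        rw [← mul_assoc, Units.inv_mul, one_mul]
      rw [key1, key2, ← add_smul, ← add_smul]
      congr 1
      push_cast
      have e1 : q ^ ((n:ℂ) + ((j:ℂ)+1)) = q ^ (n:ℂ) * q ^ ((j:ℂ)+1) :=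
        Complex.cpow_add _ _ hq0
      have e2 : q ^ ((n:ℂ) * (α - (j:ℂ)))
          = q ^ ((n:ℂ) * (α - ((j:ℂ)+1))) * q ^ (n:ℂ) := by
        rw [show (n:ℂ) * (α - (j:ℂ)) = (n:ℂ) * (α - ((j:ℂ)+1)) + (n:ℂ) by ring,
          Complex.cpow_add _ _ hq0]
      have e3 : q ^ (((n:ℂ)+1) * (α - (j:ℂ)))
          = q ^ ((n:ℂ) * (α - ((j:ℂ)+1))) * (q ^ (n:ℂ) * q ^ (α - (j:ℂ))) := by
        rw [show ((n:ℂ)+1) * (α - (j:ℂ))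
            = (n:ℂ) * (α - ((j:ℂ)+1)) + ((n:ℂ) + (α - (j:ℂ))) by ring,
          Complex.cpow_add _ _ hq0, Complex.cpow_add _ _ hq0]
      rw [e1, e2, e3]
      linear_combination (q ^ ((n:ℂ) * (α - ((j:ℂ)+1))) * q ^ (n:ℂ)) * qBinom_rec (α := α) hq j
end
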